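/- Let f : S² → S² be the antipodal map on the unit 2-sphere. If C₁ and C₂ are nonempty closed connected subsets of S² with f(C₁) = C₁ and f(C₂) = C₂, and such that S² ∖ C₁ is a disjoint union of two open sets interchanged by f, then C₁ ∩ C₂ ≠ ∅. In particular, two disjoint embedded circles in S², each invariant under the antipodal map and each separating S² into two antipodally-swapped discs, cannot exist. -/

import Mathlib

/-- Two nonempty closed connected antipodally-invariant subsets of S², one of
which separates S² into two antipodally-swapped open sets, must intersect.
In particular S² does not contain two disjoint "great circles". -/
theorem stmt16 (C₁ C₂ : Set (Metric.sphere (0 : EuclideanSpace ℝ (Fin 3)) 1))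
    (h₁ne : C₁.Nonempty) (h₂ne : C₂.Nonempty)
    (h₁cl : IsClosed C₁) (h₂cl : IsClosed C₂)
    (h₁conn : IsConnected C₁) (h₂conn : IsConnected C₂)
    (h₁inv : (fun x => -x) '' C₁ = C₁) (h₂inv : (fun x => -x) '' C₂ = C₂)
    (hsep : ∃ U V : Set (Metric.sphere (0 : EuclideanSpace ℝ (Fin 3)) 1),
      IsOpen U ∧ IsOpen V ∧ Disjoint U V ∧ C₁ᶜ = U ∪ V ∧
      (fun x => -x) '' U = V) :
    (C₁ ∩ C₂).Nonempty := by
  obtain ⟨U, V, hU, hV, hUV, hcomp, hswap⟩ := hsep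
  by_contra h
  have hsub : C₂ ⊆ U ∪ V := by
    rw [← hcomp]
    intro x hx hxC₁
    exact h ⟨x, hxC₁, hx⟩
  have hVU : (fun x => -x) '' V = U := by
    rw [← hswap, ← Set.image_comp]
    simpa using Set.image_id U
  rcases h₂conn.isPreconnected.subset_or_subset hU hV hUV hsub with hC | hC
  · have : C₂ ⊆ V := by
      rw [← h₂inv, ← hswap]; exact Set.image_mono hC
    obtain ⟨x, hx⟩ := h₂ne
    exact hUV.ne_of_mem (hC hx) (this hx) rfl
  · have : C₂ ⊆ U := by
      rw [← h₂inv, ← hVU]; exact Set.image_mono hC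
    obtain ⟨x, hx⟩ := h₂ne
    exact hUV.ne_of_mem (this hx) (hC hx) rfl
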